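/- arXiv:2605.21159 — 4 statements merged into one kernel-verified Lean document; each statement's English description precedes it below -/
import Mathlib

section
/- Let ι be a type, s a nonempty finite subset of ι, and n : ι → ℕ a function with n i ≥ 1 for every i ∈ s. Let R be a commutative ring, q ∈ R, and let N be a natural number with n i ≤ N for all i ∈ s. Then ∑_{K ⊆ s, K ≠ ∅} (q − 1)^{|K| − 1} · (gcd_{i ∈ K} n i) = ∑_{d = 1}^{N} φ(d) · ( ∑_{j = 0}^{r_d − 1} q^j ), where the left-hand sum ranges over all nonempty subsets K of s, gcd_{i∈K} n i ∈ ℕ is cast into R, φ is Euler's totient function (cast into R), and r_d = #{ i ∈ s : d divides n i }; the inner sum on the right is empty, hence 0, whenever r_d = 0. -/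
open Finset

lemma lemA {R : Type*} [CommRing R] (q : R) {ι : Type*} (T : Finset ι) :
    ∑ K ∈ T.powerset.filter (fun K => K.Nonempty), (q - 1) ^ (K.card - 1)
      = ∑ j ∈ Finset.range T.card, q ^ j := by
  classical
  induction T using Finset.induction_on with
  | empty => simp [Finset.filter_singleton]
  | @insert a T ha ih =>
    have hB : ∑ K ∈ T.powerset, (q - 1) ^ K.card = q ^ T.card := by
      have := Finset.prod_add (fun _ => q - 1) (fun _ => (1 : R)) T
      simp only [sub_add_cancel, Finset.prod_const, one_pow, mul_one] at this
      simpa using this.symm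
    rw [Finset.powerset_insert, Finset.filter_union, Finset.sum_union, ih]
    · have himg : (T.powerset.image (insert a)).filter (fun K => K.Nonempty)
          = T.powerset.image (insert a) := by
        apply Finset.filter_true_of_mem
        intro K hK
        obtain ⟨K', _, rfl⟩ := Finset.mem_image.1 hK
        exact insert_nonempty a K'
      rw [himg, Finset.sum_image (fun K hK L hL h => by
        have hKa : a ∉ K := fun h' => ha (Finset.mem_powerset.1 hK h')
        have hLa : a ∉ L := fun h' => ha (Finset.mem_powerset.1 hL h')
        have := congrArg (fun S => Finset.erase S a) h
        simpa [Finset.erase_insert hKa, Finset.erase_insert hLa] using this)]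
      have : ∀ K ∈ T.powerset, (q - 1) ^ ((insert a K).card - 1) = (q - 1) ^ K.card := by
        intro K hK
        have hKa : a ∉ K := fun h' => ha (Finset.mem_powerset.1 hK h')
        rw [Finset.card_insert_of_notMem hKa]
        simp
      rw [Finset.sum_congr rfl this, hB, Finset.card_insert_of_notMem ha,
        Finset.sum_range_succ]
    · rw [Finset.disjoint_left]
      intro K hK hK'
      have h1 : K ⊆ T := Finset.mem_powerset.1 (Finset.mem_filter.1 hK).1
      obtain ⟨K', _, rfl⟩ := Finset.mem_image.1 (Finset.mem_filter.1 hK').1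
      exact ha (h1 (Finset.mem_insert_self a K'))

/-- Let `ι` be a type, `s` a nonempty finite subset of `ι`, and `n : ι → ℕ`
with `n i ≥ 1` for every `i ∈ s`.  Let `R` be a commutative ring, `q ∈ R`, and `N` a natural
number with `n i ≤ N` for all `i ∈ s`.  Then
`∑_{∅ ≠ K ⊆ s} (q − 1)^{|K| − 1} · gcd_{i ∈ K} n i
  = ∑_{d = 1}^{N} φ(d) · ∑_{j = 0}^{r_d − 1} q^j`,
where `r_d = #{i ∈ s : d ∣ n i}` and `φ` is Euler's totient function. -/
theorem stmt_3 {ι : Type*} (s : Finset ι) (hs : s.Nonempty) (n : ι → ℕ)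
    (hn : ∀ i ∈ s, 1 ≤ n i) (R : Type*) [CommRing R] (q : R) (N : ℕ)
    (hN : ∀ i ∈ s, n i ≤ N) :
    ∑ K ∈ s.powerset.filter (fun K => K.Nonempty),
        (q - 1) ^ (K.card - 1) * ((K.gcd n : ℕ) : R) =
      ∑ d ∈ Finset.Icc 1 N, ((Nat.totient d : ℕ) : R) *
        ∑ j ∈ Finset.range ((s.filter (fun i => d ∣ n i)).card), q ^ j := by
  classical
  have key : ∀ K ∈ s.powerset.filter (fun K => K.Nonempty),
      (q - 1) ^ (K.card - 1) * ((K.gcd n : ℕ) : R)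
        = ∑ d ∈ Finset.Icc 1 N,
            (if d ∣ K.gcd n then ((Nat.totient d : ℕ) : R) * (q - 1) ^ (K.card - 1) else 0) := by
    intro K hK
    obtain ⟨hKs, hKne⟩ := Finset.mem_filter.1 hK
    rw [Finset.mem_powerset] at hKs
    obtain ⟨i0, hi0⟩ := hKne
    set m := K.gcd n with hm
    have hm0 : m ≠ 0 := by
      intro h
      have := Finset.gcd_eq_zero_iff.1 h i0 hi0
      have := hn i0 (hKs hi0); omega
    have hmN : m ≤ N := by
      have h1 : m ∣ n i0 := Finset.gcd_dvd hi0
      have h2 := hn i0 (hKs hi0)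
      have := Nat.le_of_dvd (by omega) h1
      have := hN i0 (hKs hi0); omega
    have hdiv : m.divisors = (Finset.Icc 1 N).filter (· ∣ m) := by
      ext d
      simp only [Nat.mem_divisors, Finset.mem_filter, Finset.mem_Icc]
      constructor
      · rintro ⟨hd, _⟩
        have hd0 : d ≠ 0 := by rintro rfl; exact hm0 (Nat.zero_dvd.1 hd)
        exact ⟨⟨Nat.one_le_iff_ne_zero.2 hd0, le_trans (Nat.le_of_dvd (Nat.pos_of_ne_zero hm0) hd) hmN⟩, hd⟩
      · rintro ⟨_, hd⟩; exact ⟨hd, hm0⟩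
    have : ((m : ℕ) : R) = ∑ d ∈ (Finset.Icc 1 N).filter (· ∣ m), ((Nat.totient d : ℕ) : R) := by
      rw [← hdiv, ← Nat.cast_sum]
      exact_mod_cast congrArg (Nat.cast : ℕ → R) (Nat.sum_totient m).symm
    rw [this, Finset.sum_filter, Finset.mul_sum]
    apply Finset.sum_congr rfl
    intro d _
    split <;> simp [mul_comm]
  rw [Finset.sum_congr rfl key, Finset.sum_comm]
  apply Finset.sum_congr rfl
  intro d _
  rw [← Finset.sum_filter]
  have hfilter : (s.powerset.filter (fun K => K.Nonempty)).filter (fun K => d ∣ K.gcd n)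
      = (s.filter (fun i => d ∣ n i)).powerset.filter (fun K => K.Nonempty) := by
    ext K
    simp only [Finset.mem_filter, Finset.mem_powerset, Finset.dvd_gcd_iff, Finset.subset_iff,
      Finset.mem_filter]
    aesop
  rw [hfilter, ← Finset.mul_sum, lemA]
end

section
/- Let ι be a finite type, n : ι → ℤ, and J ⊆ ι a subset such that n i ≠ 0 for some i ∉ J. Let H be the subgroup of the free abelian group ι → ℤ generated by the standard basis vectors e_j for j ∈ J together with the vector ∑_{i ∈ ι} (n i) · e_i. Then the torsion subgroup of the quotient group (ι → ℤ)/H is finite of cardinality equal to gcd{ |n i| : i ∈ ι, i ∉ J }. -/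
/-- The torsion subgroup of an abelian group: the subgroup of elements killed by some
positive integer. -/
def torsionAddSubgroup (G : Type*) [AddCommGroup G] : AddSubgroup G where
  carrier := {x | ∃ n : ℕ, 0 < n ∧ n • x = 0}
  zero_mem' := ⟨1, Nat.one_pos, by simp⟩
  add_mem' := by
    rintro x y ⟨n, hn, hx⟩ ⟨m, hm, hy⟩
    refine ⟨n * m, Nat.mul_pos hn hm, ?_⟩
    have h1 : (n * m) • x = 0 := by rw [mul_comm, mul_smul, hx, smul_zero]
    have h2 : (n * m) • y = 0 := by rw [mul_smul, hy, smul_zero]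
    rw [smul_add, h1, h2, add_zero]
  neg_mem' := by
    rintro x ⟨n, hn, hx⟩
    exact ⟨n, hn, by rw [smul_neg, hx, neg_zero]⟩

/-- Let `ι` be a finite type, `n : ι → ℤ`, and `J ⊆ ι` a subset such that
`n i ≠ 0` for some `i ∉ J`.  Let `H` be the subgroup of the free abelian group `ι → ℤ`
generated by the standard basis vectors `e_j` for `j ∈ J` together with the vector
`∑ i, (n i) • e_i`.  Then the torsion subgroup of the quotient group `(ι → ℤ)/H` is finite
of cardinality equal to `gcd {|n i| : i ∉ J}`. -/
theorem stmt_5 {ι : Type*} [Fintype ι] [DecidableEq ι]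
    (n : ι → ℤ) (J : Finset ι) (hJ : ∃ i, i ∉ J ∧ n i ≠ 0)
    (H : AddSubgroup (ι → ℤ))
    (hH : H = AddSubgroup.closure
        (((fun j => (Pi.single j (1 : ℤ) : ι → ℤ)) '' ↑J) ∪
          {∑ i, n i • (Pi.single i (1 : ℤ) : ι → ℤ)})) :
    Finite (torsionAddSubgroup ((ι → ℤ) ⧸ H)) ∧
      Nat.card (torsionAddSubgroup ((ι → ℤ) ⧸ H)) =
        Finset.gcd (Finset.univ.filter (fun i => i ∉ J)) (fun i => (n i).natAbs) := by
  classical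
  obtain ⟨i₀, hi₀J, hi₀n⟩ := hJ
  set Ic : Finset ι := Finset.univ.filter (fun i => i ∉ J) with hIc
  set g : ℕ := Ic.gcd (fun i => (n i).natAbs) with hg
  have hi₀Ic : i₀ ∈ Ic := by simp [hIc, hi₀J]
  have hgdvd : ∀ i, i ∉ J → (g : ℤ) ∣ n i := by
    intro i hi
    have h1 : g ∣ (n i).natAbs := Finset.gcd_dvd (by simp [hIc, hi])
    exact (Int.natCast_dvd_natCast.mpr h1).trans (Int.natAbs_dvd.mpr dvd_rfl)
  have hgpos : 0 < g := by
    rcases Nat.eq_zero_or_pos g with h | h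
    · exfalso
      have h0 : Ic.gcd (fun i => (n i).natAbs) = 0 := hg ▸ h
      exact hi₀n (Int.natAbs_eq_zero.mp (Finset.gcd_eq_zero_iff.mp h0 i₀ hi₀Ic))
    · exact h
  have hv : (∑ i, n i • (Pi.single i (1 : ℤ) : ι → ℤ)) = n := by
    funext k
    simp [Finset.sum_apply, Pi.single_apply]
  have hmem : ∀ x : ι → ℤ, x ∈ H ↔ ∃ c : ℤ, ∀ i, i ∉ J → x i = c * n i := by
    intro x
    rw [hH, hv]
    constructor
    · intro hx
      induction hx using AddSubgroup.closure_induction with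
      | mem y hy =>
        rcases hy with ⟨j, hjJ, rfl⟩ | hy
        · refine ⟨0, fun i hi => ?_⟩
          have : i ≠ j := fun h => hi (h ▸ hjJ)
          simp [Pi.single_apply, this]
        · rcases Set.mem_singleton_iff.mp hy with rfl
          exact ⟨1, fun i _ => (one_mul _).symm⟩
      | zero => exact ⟨0, fun i _ => by simp⟩
      | add a b _ _ ha hb =>
        obtain ⟨c, hc⟩ := ha
        obtain ⟨d, hd⟩ := hb
        exact ⟨c + d, fun i hi => by simp [hc i hi, hd i hi, add_mul]⟩
      | neg a _ ha =>
        obtain ⟨c, hc⟩ := ha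
        exact ⟨-c, fun i hi => by simp [hc i hi]⟩
    · rintro ⟨c, hc⟩
      have hx : x = c • n + ∑ j ∈ J, Pi.single j (x j - c * n j) := by
        funext k
        by_cases hk : k ∈ J
        · simp [Finset.sum_apply, Pi.single_apply, Finset.sum_ite_eq' J k, hk]
        · simp [Finset.sum_apply, Pi.single_apply, Finset.sum_ite_eq' J k, hk, hc k hk,
            mul_comm]
      rw [hx]
      have hn_mem : n ∈ ((fun j => (Pi.single j (1:ℤ) : ι → ℤ)) '' ↑J ∪ {n}) := Or.inr rfl
      refine add_mem (zsmul_mem (AddSubgroup.subset_closure hn_mem) c) ?_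
      refine sum_mem fun j hj => ?_
      have hj_mem : (Pi.single j (1:ℤ) : ι → ℤ) ∈
          ((fun j => (Pi.single j (1:ℤ) : ι → ℤ)) '' ↑J ∪ {n}) := Or.inl ⟨j, hj, rfl⟩
      have hsingle : Pi.single j (x j - c * n j) = (x j - c * n j) • (Pi.single j (1:ℤ) : ι → ℤ) := by
        rw [← Pi.single_smul, smul_eq_mul, mul_one]
      rw [hsingle]
      exact zsmul_mem (AddSubgroup.subset_closure hj_mem) _
  -- the primitive vector
  set n' : ι → ℤ := fun i => if i ∈ J then 0 else n i / g with hn'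
  have hgn' : ∀ i, i ∉ J → (g : ℤ) * n' i = n i := by
    intro i hi
    simp only [hn', if_neg hi]
    exact Int.mul_ediv_cancel' (hgdvd i hi)
  have hn'i₀ : n' i₀ ≠ 0 := by
    intro h
    apply hi₀n
    rw [← hgn' i₀ hi₀J, h, mul_zero]
  have hgcd1 : Ic.gcd (fun i => (n' i).natAbs) = 1 := by
    have hcongr : Ic.gcd (fun i => (n' i).natAbs)
        = Ic.gcd (fun i => (n i).natAbs / Ic.gcd (fun i => (n i).natAbs)) := by
      refine Finset.gcd_congr rfl fun i hi => ?_
      have hiJ : i ∉ J := by simpa [hIc] using hi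
      simp only [hn']
      rw [if_neg hiJ, Int.natAbs_ediv_of_dvd (hgdvd i hiJ)]
      simp [hg]
    rw [hcongr]
    exact Finset.gcd_div_eq_one hi₀Ic (Int.natAbs_ne_zero.mpr hi₀n)
  -- the homomorphism detecting torsion
  set f : ℤ →+ ((ι → ℤ) ⧸ H) := (QuotientAddGroup.mk' H).comp (zmultiplesHom (ι → ℤ) n') with hf
  have hf_apply : ∀ t : ℤ, f t = QuotientAddGroup.mk (t • n') := fun t => rfl
  have hker : ∀ t : ℤ, f t = 0 ↔ (g : ℤ) ∣ t := by
    intro t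
    rw [hf_apply, QuotientAddGroup.eq_zero_iff, hmem]
    constructor
    · rintro ⟨c, hc⟩
      have h1 := hc i₀ hi₀J
      rw [Pi.smul_apply, smul_eq_mul, ← hgn' i₀ hi₀J] at h1
      have h2 : t = c * g := by
        have := mul_right_cancel₀ hn'i₀ (by linarith [h1] : t * n' i₀ = (c * g) * n' i₀)
        exact this
      exact ⟨c, by rw [h2]; ring⟩
    · rintro ⟨s, rfl⟩
      refine ⟨s, fun i hi => ?_⟩
      rw [Pi.smul_apply, smul_eq_mul, ← hgn' i hi]
      ring
  have htor : ∀ q : (ι → ℤ) ⧸ H, q ∈ torsionAddSubgroup ((ι → ℤ) ⧸ H) ↔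
      ∃ k : ℕ, 0 < k ∧ k • q = 0 := fun q => Iff.rfl
  have hmemT : ∀ t : ℤ, f t ∈ torsionAddSubgroup ((ι → ℤ) ⧸ H) := by
    intro t
    refine ⟨g, hgpos, ?_⟩
    have : (g : ℕ) • f t = f ((g : ℤ) * t) := by
      rw [← natCast_zsmul, ← map_zsmul, smul_eq_mul]
    rw [this, (hker _).mpr ⟨t, rfl⟩]
  have hsurjT : ∀ q ∈ torsionAddSubgroup ((ι → ℤ) ⧸ H), ∃ t : ℤ, f t = q := by
    intro q hq
    obtain ⟨x, rfl⟩ := QuotientAddGroup.mk_surjective q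
    obtain ⟨k, hk, hkx⟩ := (htor _).mp hq
    have hkH : (k : ℕ) • x ∈ H := by
      rw [← QuotientAddGroup.eq_zero_iff]
      exact hkx
    obtain ⟨c, hc⟩ := (hmem _).mp hkH
    have hc' : ∀ i ∈ Ic, (k : ℤ) * x i = (c * g) * n' i := by
      intro i hi
      have hiJ : i ∉ J := by simpa [hIc] using hi
      have := hc i hiJ
      rw [Pi.smul_apply, nsmul_eq_mul] at this
      rw [this, ← hgn' i hiJ]
      ring
    have hdvd : (k : ℤ) ∣ c * g := by
      have h1 : ∀ i ∈ Ic, k ∣ (c * (g:ℤ)).natAbs * (n' i).natAbs := by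
        intro i hi
        have : (k : ℤ) ∣ (c * g) * n' i := ⟨x i, (hc' i hi).symm⟩
        have h2 := Int.natAbs_dvd_natAbs.mpr this
        rwa [Int.natAbs_natCast, Int.natAbs_mul] at h2
      have h3 : k ∣ Ic.gcd (fun i => (c * (g:ℤ)).natAbs * (n' i).natAbs) :=
        Finset.dvd_gcd h1
      rw [Finset.gcd_mul_left, hgcd1] at h3
      simp only [normalize_eq, mul_one] at h3
      exact Int.dvd_natAbs.mp (Int.natCast_dvd_natCast.mpr h3)
    obtain ⟨s, hs⟩ := hdvd
    have hxs : ∀ i, i ∉ J → x i = s * n' i := by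
      intro i hi
      have h4 := hc' i (by simp [hIc, hi])
      rw [hs] at h4
      have hk0 : (k : ℤ) ≠ 0 := Int.natCast_ne_zero.mpr hk.ne'
      have : (k : ℤ) * x i = (k : ℤ) * (s * n' i) := by rw [h4]; ring
      exact mul_left_cancel₀ hk0 this
    refine ⟨s, ?_⟩
    rw [hf_apply]
    rw [QuotientAddGroup.eq]
    refine (hmem _).mpr ⟨0, fun i hi => ?_⟩
    simp [hxs i hi, mul_comm]
  set T := torsionAddSubgroup ((ι → ℤ) ⧸ H) with hT
  let f' : ℤ →+ T := f.codRestrict T hmemT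
  have hf'surj : Function.Surjective f' := by
    rintro ⟨q, hq⟩
    obtain ⟨t, ht⟩ := hsurjT q hq
    exact ⟨t, Subtype.ext ht⟩
  have hker' : f'.ker = AddSubgroup.zmultiples (g : ℤ) := by
    ext t
    rw [AddMonoidHom.mem_ker, Int.mem_zmultiples_iff]
    constructor
    · intro h
      exact (hker t).mp (congrArg Subtype.val h)
    · intro h
      exact Subtype.ext ((hker t).mpr h)
  haveI : NeZero g := ⟨hgpos.ne'⟩
  have E : T ≃+ ZMod g :=
    ((QuotientAddGroup.quotientKerEquivOfSurjective f' hf'surj).symm.trans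
      (QuotientAddGroup.quotientAddEquivOfEq hker')).trans
      (Int.quotientZMultiplesNatEquivZMod g)
  refine ⟨Finite.of_equiv _ E.toEquiv.symm, ?_⟩
  rw [Nat.card_congr E.toEquiv, Nat.card_zmod]
end

section
/- Let ι be a type, X an abelian group, and F a function assigning to each finite subset s ⊆ ι a subgroup F(s) of X, such that for all finite subsets s, t: (i) F(s ∪ t) = F(s) + F(t); (ii) F(s ∩ t) = F(s) ∩ F(t); and (iii) for s ⊆ t, the quotient F(t)/F(s) is torsion-free, i.e., every element of F(t) that is torsion modulo F(s) lies in F(s). Fix a finite subset t ⊆ ι and an element x ∈ X that is torsion modulo F(t). Call a subset s ⊆ t admissible for x if there exists y ∈ X, torsion modulo F(s), with x − y ∈ F(t). Then: (a) t itself is admissible, and if s₁ and s₂ are admissible then so is s₁ ∩ s₂; consequently there is a (unique) least admissible subset s₀ ⊆ t; (b) for every admissible s, any two witnesses y₁, y₂ (each torsion modulo F(s) with x − yᵢ ∈ F(t)) satisfy y₁ − y₂ ∈ F(s), so the class of the witness modulo F(s) is unique. In particular, below the pair (t, x mod F(t)) there is a unique minimal pair (s₀, y mod F(s₀)). -/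
/-- `x` is torsion modulo the subgroup `A`: some positive multiple of `x` lies in `A`. -/
def TorsionModulo {X : Type*} [AddCommGroup X] (A : AddSubgroup X) (x : X) : Prop :=
  ∃ n : ℕ, 0 < n ∧ n • x ∈ A

/-- A subset `s ⊆ t` is admissible for `x` (relative to the family `F` of subgroups) if
there exists `y`, torsion modulo `F s`, with `x − y ∈ F t`. -/
def AdmissibleFor {ι X : Type*} [AddCommGroup X] (F : Finset ι → AddSubgroup X)
    (t : Finset ι) (x : X) (s : Finset ι) : Prop :=
  s ⊆ t ∧ ∃ y : X, TorsionModulo (F s) y ∧ x - y ∈ F t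

/-- Let `ι` be a type, `X` an abelian group, and `F` a function assigning
to each finite subset `s ⊆ ι` a subgroup `F s` of `X`, such that `F (s ∪ t) = F s ⊔ F t`,
`F (s ∩ t) = F s ⊓ F t`, and for `s ⊆ t` the quotient `F t / F s` is torsion-free.
Fix a finite subset `t ⊆ ι` and `x ∈ X` torsion modulo `F t`.  Then:
(a) `t` itself is admissible for `x`, and admissible subsets are closed under intersection;
consequently there is a (unique) least admissible subset `s₀ ⊆ t`;
(b) for every admissible `s`, any two witnesses `y₁, y₂` satisfy `y₁ − y₂ ∈ F s`,
so the class of the witness modulo `F s` is unique. -/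
theorem stmt_8 {ι : Type*} [DecidableEq ι] {X : Type*} [AddCommGroup X]
    (F : Finset ι → AddSubgroup X)
    (hsup : ∀ s t : Finset ι, F (s ∪ t) = F s ⊔ F t)
    (hinf : ∀ s t : Finset ι, F (s ∩ t) = F s ⊓ F t)
    (htf : ∀ s t : Finset ι, s ⊆ t → ∀ x ∈ F t, TorsionModulo (F s) x → x ∈ F s)
    (t : Finset ι) (x : X) (hx : TorsionModulo (F t) x) :
    AdmissibleFor F t x t ∧
      (∀ s₁ s₂ : Finset ι, AdmissibleFor F t x s₁ → AdmissibleFor F t x s₂ →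
        AdmissibleFor F t x (s₁ ∩ s₂)) ∧
      (∃ s₀ : Finset ι, AdmissibleFor F t x s₀ ∧
        ∀ s : Finset ι, AdmissibleFor F t x s → s₀ ⊆ s) ∧
      (∀ s : Finset ι, AdmissibleFor F t x s → ∀ y₁ y₂ : X,
        TorsionModulo (F s) y₁ → x - y₁ ∈ F t →
        TorsionModulo (F s) y₂ → x - y₂ ∈ F t → y₁ - y₂ ∈ F s) := by
  classical
  have hmono : ∀ s u : Finset ι, s ⊆ u → F s ≤ F u := by
    intro s u hsu
    have h := hsup s u
    rw [Finset.union_eq_right.mpr hsu] at h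
    rw [h]; exact le_sup_left
  have hb : ∀ s : Finset ι, AdmissibleFor F t x s → ∀ y₁ y₂ : X,
      TorsionModulo (F s) y₁ → x - y₁ ∈ F t →
      TorsionModulo (F s) y₂ → x - y₂ ∈ F t → y₁ - y₂ ∈ F s := by
    rintro s hs y₁ y₂ ⟨n₁, hn₁, h₁⟩ hx₁ ⟨n₂, hn₂, h₂⟩ hx₂
    have hmem : y₁ - y₂ ∈ F t := by
      have := (F t).sub_mem hx₂ hx₁
      simpa [sub_sub_sub_cancel_left] using this
    refine htf s t hs.1 _ hmem ⟨n₁ * n₂, Nat.mul_pos hn₁ hn₂, ?_⟩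
    have heq : (n₁ * n₂) • (y₁ - y₂) = n₂ • (n₁ • y₁) - n₁ • (n₂ • y₂) := by
      rw [smul_sub, ← mul_smul, ← mul_smul, mul_comm n₂ n₁]
    rw [heq]
    exact (F s).sub_mem ((F s).nsmul_mem h₁ n₂) ((F s).nsmul_mem h₂ n₁)
  have hta : AdmissibleFor F t x t := ⟨Finset.Subset.refl t, x, hx, by simpa using (F t).zero_mem⟩
  have hinter : ∀ s₁ s₂ : Finset ι, AdmissibleFor F t x s₁ → AdmissibleFor F t x s₂ →
      AdmissibleFor F t x (s₁ ∩ s₂) := by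
    rintro s₁ s₂ ⟨hs₁, y₁, ⟨n₁, hn₁, h₁⟩, hx₁⟩ ⟨hs₂, y₂, ⟨n₂, hn₂, h₂⟩, hx₂⟩
    have hut : s₁ ∪ s₂ ⊆ t := Finset.union_subset hs₁ hs₂
    have hd : y₁ - y₂ ∈ F (s₁ ∪ s₂) := by
      refine htf _ t hut _ ?_ ⟨n₁ * n₂, Nat.mul_pos hn₁ hn₂, ?_⟩
      · have := (F t).sub_mem hx₂ hx₁
        simpa [sub_sub_sub_cancel_left] using this
      · have heq : (n₁ * n₂) • (y₁ - y₂) = n₂ • (n₁ • y₁) - n₁ • (n₂ • y₂) := by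
          rw [smul_sub, ← mul_smul, ← mul_smul, mul_comm n₂ n₁]
        rw [heq, hsup]
        exact sub_mem (AddSubgroup.mem_sup_left ((F s₁).nsmul_mem h₁ n₂))
          (AddSubgroup.mem_sup_right ((F s₂).nsmul_mem h₂ n₁))
    rw [hsup] at hd
    obtain ⟨a, ha, b, hbmem, hab⟩ := AddSubgroup.mem_sup.mp hd
    refine ⟨(Finset.inter_subset_left).trans hs₁, y₁ - a, ⟨n₁ * n₂, Nat.mul_pos hn₁ hn₂, ?_⟩, ?_⟩
    · rw [hinf]
      constructor
      · have heq : (n₁ * n₂) • (y₁ - a) = n₂ • (n₁ • y₁ - n₁ • a) := by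
          rw [← smul_sub, ← mul_smul, mul_comm n₂ n₁]
        rw [heq]
        exact (F s₁).nsmul_mem ((F s₁).sub_mem h₁ ((F s₁).nsmul_mem ha n₁)) n₂
      · have hy : y₁ - a = y₂ + b := by
          have hb' : b = y₁ - y₂ - a := by rw [← hab]; abel
          rw [hb']; abel
        have heq : (n₁ * n₂) • (y₁ - a) = n₁ • (n₂ • y₂ + n₂ • b) := by
          rw [hy, ← smul_add, ← mul_smul]
        rw [heq]
        exact (F s₂).nsmul_mem ((F s₂).add_mem h₂ ((F s₂).nsmul_mem hbmem n₂)) n₁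
    · have : x - (y₁ - a) = (x - y₁) + a := by abel
      rw [this]
      exact (F t).add_mem hx₁ (hmono s₁ t hs₁ ha)
  refine ⟨hta, hinter, ?_, hb⟩
  have hex : ∃ n : ℕ, ∃ s : Finset ι, AdmissibleFor F t x s ∧ s.card = n :=
    ⟨t.card, t, hta, rfl⟩
  obtain ⟨s₀, hs₀, hcard⟩ := Nat.find_spec hex
  refine ⟨s₀, hs₀, fun s hs => ?_⟩
  have h' := hinter s₀ s hs₀ hs
  have hle : Nat.find hex ≤ (s₀ ∩ s).card := Nat.find_min' hex ⟨s₀ ∩ s, h', rfl⟩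
  have hsub : s₀ ∩ s ⊆ s₀ := Finset.inter_subset_left
  have : s₀ ∩ s = s₀ :=
    Finset.eq_of_subset_of_card_le hsub (hcard ▸ hle)
  rw [← this]
  exact Finset.inter_subset_right
end

section
/- Let k be a field and W a finite group whose order is invertible in k. Let C be a commutative k-algebra which is local with nilpotent maximal ideal m and residue field k (the composite k → C → C/m is bijective), equipped with an action of W by k-algebra automorphisms. Let L be a C-module endowed with an additive W-action that is semilinear over the W-action on C, i.e., w·(c·x) = (w·c)·(w·x) for all w ∈ W, c ∈ C, x ∈ L. If W acts trivially on L/mL, i.e., w·x − x ∈ m·L for all w ∈ W and x ∈ L, then L is generated as a C-module by its invariants L^W = {x ∈ L : w·x = x for all w ∈ W}; equivalently, the canonical C-linear map C ⊗_k L^W → L is surjective. In particular, if L^W = 0 then L = 0. -/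
/-- Let `k` be a field and `W` a finite group whose order is invertible
in `k`.  Let `C` be a commutative `k`-algebra which is local with nilpotent maximal ideal
`m` and residue field `k` (the composite `k → C → C/m` is bijective), with an action of `W`
by `k`-algebra automorphisms.  Let `L` be a `C`-module with an additive `W`-action that is
semilinear over the `W`-action on `C`.  If `W` acts trivially on `L/mL`, then `L` is
generated as a `C`-module by its invariants `L^W`; in particular, if `L^W = 0` then
`L = 0`. -/
theorem stmt_10
    (k : Type*) [Field k]
    (W : Type*) [Group W] [Finite W]
    (hW : (Nat.card W : k) ≠ 0)
    (C : Type*) [CommRing C] [Algebra k C]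
    [MulSemiringAction W C] [SMulCommClass W k C]
    (m : Ideal C) (hm : m.IsMaximal) (hnil : IsNilpotent m)
    (hres : Function.Bijective ((Ideal.Quotient.mk m).comp (algebraMap k C)))
    (L : Type*) [AddCommGroup L] [Module C L]
    [DistribMulAction W L]
    (hsemi : ∀ (w : W) (c : C) (x : L), w • (c • x) = (w • c) • (w • x))
    (htriv : ∀ (w : W) (x : L), w • x - x ∈ m • (⊤ : Submodule C L)) :
    Submodule.span C {x : L | ∀ w : W, w • x = x} = ⊤ ∧
      ((∀ x : L, (∀ w : W, w • x = x) → x = 0) → ∀ x : L, x = 0) := by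
  classical
  cases nonempty_fintype W
  obtain ⟨n, hn⟩ := hnil
  set u : C := algebraMap k C (Nat.card W : k)⁻¹ with hu
  have hu_inv : ∀ w : W, w • u = u := by
    intro w
    rw [hu, Algebra.algebraMap_eq_smul_one, smul_comm, smul_one]
  set N := Submodule.span C {x : L | ∀ w : W, w • x = x} with hN
  have key : ∀ x : L, x ∈ N ⊔ m • (⊤ : Submodule C L) := by
    intro x
    set s : L := ∑ w : W, w • x with hs
    have hsinv : ∀ w : W, w • s = s := by
      intro w
      rw [hs, Finset.smul_sum]
      exact Fintype.sum_equiv (Equiv.mulLeft w) _ _ (fun v => (mul_smul w v x).symm)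
    have he : u • s ∈ N := Submodule.subset_span (fun w => by
      rw [hsemi, hu_inv, hsinv])
    have hcard : u • ((Nat.card W : C) • x) = x := by
      rw [smul_smul, hu, ← map_natCast (algebraMap k C) (Nat.card W), ← map_mul,
        inv_mul_cancel₀ hW, map_one, one_smul]
    have hsum : (Nat.card W : C) • x - s = ∑ w : W, (x - w • x) := by
      rw [Finset.sum_sub_distrib, Finset.sum_const, hs]
      congr 1
      rw [Nat.cast_smul_eq_nsmul]
      congr 1
      simp [Nat.card_eq_fintype_card]
    have hx : x - u • s ∈ m • (⊤ : Submodule C L) := by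
      have : x - u • s = u • ((Nat.card W : C) • x - s) := by
        rw [smul_sub, hcard]
      rw [this, hsum]
      refine Submodule.smul_mem _ _ (Submodule.sum_mem _ (fun w _ => ?_))
      have := htriv w x
      simpa using Submodule.neg_mem _ this
    have : x = u • s + (x - u • s) := by abel
    rw [this]
    exact Submodule.add_mem _ (Submodule.mem_sup_left he) (Submodule.mem_sup_right hx)
  have h1 : (⊤ : Submodule C L) ≤ N ⊔ m • (⊤ : Submodule C L) := fun x _ => key x
  have hiter : ∀ i : ℕ, (⊤ : Submodule C L) ≤ N ⊔ (m ^ i) • (⊤ : Submodule C L) := by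
    intro i
    induction i with
    | zero => simp [pow_zero, Ideal.one_eq_top, Submodule.top_smul]
    | succ i ih =>
      refine ih.trans (sup_le le_sup_left ?_)
      calc (m ^ i) • (⊤ : Submodule C L)
          ≤ (m ^ i) • (N ⊔ m • (⊤ : Submodule C L)) := Submodule.smul_mono le_rfl h1
        _ = (m ^ i) • N ⊔ (m ^ i) • (m • (⊤ : Submodule C L)) := Submodule.smul_sup _ _ _
        _ ≤ N ⊔ (m ^ (i + 1)) • (⊤ : Submodule C L) := by
            refine sup_le_sup Submodule.smul_le_right (le_of_eq ?_)
            rw [pow_succ, ← Ideal.smul_eq_mul, Submodule.smul_assoc]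
  have hspan : N = ⊤ := by
    have := hiter n
    rw [hn] at this
    simpa using this
  refine ⟨hspan, fun hz x => ?_⟩
  have hle : N ≤ ⊥ := Submodule.span_le.mpr (fun y hy => by
    simp [hz y hy])
  have : x ∈ N := hspan ▸ Submodule.mem_top
  simpa using hle this
end
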